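/- Let μ be a probability distribution on the field 𝔽_3 = ℤ/3ℤ and let U_1, U_2 be i.i.d. random variables with distribution μ. Then for every λ ∈ 𝔽_3, H(U_1 + 2·U_2) ≥ H(U_1 + λ·U_2); that is, λ = 2 maximizes H(U_1 + λ U_2) over λ ∈ 𝔽_3. Moreover, if μ(1) = μ(2) then H(U_1 + 2·U_2) = H(U_1 + U_2). -/

import Mathlib

open MeasureTheory ProbabilityTheory

/-- Shannon entropy (in nats) of a discrete random variable `X` on the
probability space `(Ω, P)`: `H(X) = -∑ₛ P(X = s) log P(X = s)`. -/
noncomputable def shEnt {Ω S : Type*} [MeasurableSpace Ω] (P : Measure Ω) (X : Ω → S) : ℝ :=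
  ∑' s : S, Real.negMulLog (P (X ⁻¹' {s})).toReal


section Aux
open Real

noncomputable def gg (x : ℝ) : ℝ := x * Real.log x

lemma gg_cont : Continuous gg := Real.continuous_mul_log

lemma hasDerivAt_gg_shift (c x : ℝ) (h : c + x ≠ 0) :
    HasDerivAt (fun A : ℝ => gg (c+A)) (Real.log (c+x) + 1) x := by
  have := (Real.hasDerivAt_mul_log (x := c+x) h).comp x
    ((hasDerivAt_id x).const_add c)
  simpa [gg, Function.comp_def] using this

-- Lemma 2
lemma L2 (σ A C : ℝ) (hσ : 0 < σ) (hA : 0 ≤ A) (hC : 0 ≤ C) :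
    gg (σ+A+C) + gg σ - gg (σ+A) - gg (σ+C) ≤ A*C/σ := by
  have key : AntitoneOn (fun A : ℝ => gg (σ+C+A) - gg (σ+A) - A*(C/σ)) (Set.Ici 0) := by
    apply antitoneOn_of_deriv_nonpos (convex_Ici 0)
    · exact ((gg_cont.comp (by continuity)).sub (gg_cont.comp (by continuity))).continuousOn.sub
        (continuous_id.mul continuous_const).continuousOn
    · intro x hx
      rw [interior_Ici] at hx
      have hx0 : (0:ℝ) < x := hx
      exact (((hasDerivAt_gg_shift (σ+C) x (by positivity)).sub
        (hasDerivAt_gg_shift σ x (by positivity))).sub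
        (hasDerivAt_mul_const (C/σ))).differentiableAt.differentiableWithinAt
    · intro x hx
      rw [interior_Ici] at hx
      have hx0 : (0:ℝ) < x := hx
      have hd : deriv (fun A : ℝ => gg (σ+C+A) - gg (σ+A) - A*(C/σ)) x
          = (Real.log (σ+C+x) + 1) - (Real.log (σ+x) + 1) - C/σ :=
        (((hasDerivAt_gg_shift (σ+C) x (by positivity)).sub
          (hasDerivAt_gg_shift σ x (by positivity))).sub
          (hasDerivAt_mul_const (C/σ))).deriv
      rw [hd]
      have hlog : Real.log (σ+C+x) - Real.log (σ+x) ≤ C/(σ+x) := by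
        have h1 : Real.log ((σ+C+x)/(σ+x)) ≤ (σ+C+x)/(σ+x) - 1 :=
          Real.log_le_sub_one_of_pos (by positivity)
        rw [Real.log_div (by positivity) (by positivity)] at h1
        have h2 : (σ+C+x)/(σ+x) - 1 = C/(σ+x) := by field_simp; ring
        linarith [h2 ▸ h1]
      have h2 : C/(σ+x) ≤ C/σ := by gcongr; linarith
      linarith
  have h := key (Set.self_mem_Ici) (Set.mem_Ici.mpr hA) hA
  simp only [add_zero, zero_mul, sub_zero] at h
  have e1 : gg (σ+C+A) = gg (σ+A+C) := by ring_nf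
  have e2 : A*(C/σ) = A*C/σ := by ring
  linarith [e1 ▸ e2 ▸ h]


-- Lemma 1
lemma L1 (s m : ℝ) (hs : 0 < s) (hm : 0 ≤ m) (hms : m ≤ s) :
    m^2/(s+m) ≤ gg (s+m) + gg (s-m) - 2*gg s := by
  have key : MonotoneOn (fun m : ℝ => gg (s+m) + gg (s-m) - m^2/(s+m)) (Set.Icc 0 s) := by
    apply monotoneOn_of_deriv_nonneg (convex_Icc 0 s)
    · apply ContinuousOn.sub
      · exact ((gg_cont.comp (continuous_const.add continuous_id)).add
          (gg_cont.comp (continuous_const.sub continuous_id))).continuousOn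
      · apply ContinuousOn.div (continuous_pow 2).continuousOn
          (continuous_const.add continuous_id).continuousOn
        intro x hx
        have h1 := hx.1
        exact ne_of_gt (show 0 < s + x by linarith)
    · intro x hx
      rw [interior_Icc] at hx
      obtain ⟨hx0, hxs⟩ := hx
      have hd1 : HasDerivAt (fun m : ℝ => gg (s-m)) (-(Real.log (s-x) + 1)) x := by
        have := (Real.hasDerivAt_mul_log (x := s-x) (by linarith : (0:ℝ) < s - x).ne').comp x
          ((hasDerivAt_id x).neg.const_add s)
        simpa [gg, Function.comp_def] using this
      have hdq : HasDerivAt (fun y : ℝ => y^2/(s+y)) ((2*x*(s+x) - x^2)/(s+x)^2) x := by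
        have := (hasDerivAt_pow 2 x).div ((hasDerivAt_id x).const_add s)
          (by simp only [id_eq]; positivity)
        simp only [id_eq] at this
        rw [show (2*x*(s+x) - x^2)/(s+x)^2 = ((2:ℕ) * x ^ (2 - 1) * (s + x) - x ^ 2 * 1) / (s + x) ^ 2 by push_cast; ring]
        exact this
      exact (((hasDerivAt_gg_shift s x (by positivity)).add hd1).sub
        hdq).differentiableAt.differentiableWithinAt
    · intro x hx
      rw [interior_Icc] at hx
      obtain ⟨hx0, hxs⟩ := hx
      have hd1 : HasDerivAt (fun m : ℝ => gg (s-m)) (-(Real.log (s-x) + 1)) x := by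
        have := (Real.hasDerivAt_mul_log (x := s-x) (by linarith : (0:ℝ) < s - x).ne').comp x
          ((hasDerivAt_id x).neg.const_add s)
        simpa [gg, Function.comp_def] using this
      have hdq : HasDerivAt (fun y : ℝ => y^2/(s+y)) ((2*x*(s+x) - x^2)/(s+x)^2) x := by
        have := (hasDerivAt_pow 2 x).div ((hasDerivAt_id x).const_add s)
          (by simp only [id_eq]; positivity)
        simp only [id_eq] at this
        rw [show (2*x*(s+x) - x^2)/(s+x)^2 = ((2:ℕ) * x ^ (2 - 1) * (s + x) - x ^ 2 * 1) / (s + x) ^ 2 by push_cast; ring]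
        exact this
      have hD := (((hasDerivAt_gg_shift s x (by positivity)).add hd1).sub hdq).deriv
      rw [show deriv (fun m : ℝ => gg (s+m) + gg (s-m) - m^2/(s+m)) x = _ from hD]
      -- cleaned
      have hlog : Real.log (s+x) - Real.log (s-x) ≥ 2*x/(s+x) := by
        have h1 : Real.log ((s-x)/(s+x)) ≤ (s-x)/(s+x) - 1 :=
          Real.log_le_sub_one_of_pos (div_pos (by linarith) (by positivity))
        rw [Real.log_div (by linarith : (0:ℝ) < s - x).ne' (by positivity)] at h1
        have h2 : (s-x)/(s+x) - 1 = -(2*x/(s+x)) := by field_simp; ring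
        linarith [h2 ▸ h1]
      have hq : (2*x*(s+x) - x^2) / (s+x)^2 ≤ 2*x/(s+x) := by
        rw [div_le_div_iff₀ (by positivity) (by positivity)]
        nlinarith [sq_nonneg x, sq_nonneg (s+x)]
      linarith
  have h := key (Set.mem_Icc.mpr ⟨le_refl 0, hs.le⟩) (Set.mem_Icc.mpr ⟨hm, hms⟩) hm
  have h0 : gg (s+0) + gg (s-0) - 0^2/(s+0) = 2*gg s := by norm_num; ring
  linarith

lemma core (s m A C : ℝ) (hm : 0 ≤ m) (hms : m ≤ s) (hA : 0 ≤ A) (hC : 0 ≤ C)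
    (hAC : m^2 = A*C) :
    gg (s+A+C+m) + 2*gg s ≤ gg (s+C+m) + gg (s-m) + gg (s+A+m) := by
  rcases eq_or_lt_of_le hA with hA0 | hApos
  · have hm0 : m = 0 := by nlinarith
    subst hm0; rw [← hA0]
    have e1 : gg (s+0+C+0) = gg (s+C+0) := by ring_nf
    have e2 : gg (s+0+0) = gg s := by norm_num
    have e3 : gg (s-0) = gg s := by norm_num
    linarith
  rcases eq_or_lt_of_le hC with hC0 | hCpos
  · have hm0 : m = 0 := by nlinarith
    subst hm0; rw [← hC0]
    have e1 : gg (s+A+0+0) = gg (s+A+0) := by ring_nf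
    have e2 : gg (s+0+0) = gg s := by norm_num
    have e3 : gg (s-0) = gg s := by norm_num
    linarith
  · have hmpos : 0 < m := by nlinarith
    have hs : 0 < s := lt_of_lt_of_le hmpos hms
    have hσ : 0 < s + m := by linarith
    have h2 := L2 (s+m) A C hσ hA hC
    have h1 := L1 s m hs hm hms
    have e1 : gg (s+m+A+C) = gg (s+A+C+m) := by ring_nf
    have e2 : gg (s+m+A) = gg (s+A+m) := by ring_nf
    have e3 : gg (s+m+C) = gg (s+C+m) := by ring_nf
    have e4 : m^2/(s+m) = A*C/(s+m) := by rw [hAC]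
    linarith

lemma MRI_sorted (a b c : ℝ) (hc : 0 ≤ c) (hcb : c ≤ b) (hba : b ≤ a) :
    gg (a^2+b^2+c^2) + 2*gg (a*b+b*c+c*a) ≤ gg (a^2+2*b*c) + gg (b^2+2*c*a) + gg (c^2+2*a*b) := by
  have hb : 0 ≤ b := le_trans hc hcb
  have ha : 0 ≤ a := le_trans hb hba
  have h := core (a*b+b*c+c*a) ((b-c)*(a-b)) ((b-c)^2) ((a-b)^2)
    (mul_nonneg (by linarith) (by linarith))
    (by nlinarith [sq_nonneg b, mul_nonneg hc ha])
    (sq_nonneg _) (sq_nonneg _) (by ring)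
  have e1 : a*b+b*c+c*a+(b-c)^2+(a-b)^2+(b-c)*(a-b) = a^2+b^2+c^2 := by ring
  have e2 : a*b+b*c+c*a+(a-b)^2+(b-c)*(a-b) = a^2+2*(b*c) := by ring
  have e3 : a*b+b*c+c*a-(b-c)*(a-b) = b^2+2*(c*a) := by ring
  have e4 : a*b+b*c+c*a+(b-c)^2+(b-c)*(a-b) = c^2+2*(a*b) := by ring
  rw [e1, e2, e3, e4] at h
  have f2 : gg (a^2+2*(b*c)) = gg (a^2+2*b*c) := by ring_nf
  have f3 : gg (b^2+2*(c*a)) = gg (b^2+2*c*a) := by ring_nf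
  have f4 : gg (c^2+2*(a*b)) = gg (c^2+2*a*b) := by ring_nf
  linarith

lemma MRI (a b c : ℝ) (ha : 0 ≤ a) (hb : 0 ≤ b) (hc : 0 ≤ c) :
    gg (a^2+b^2+c^2) + 2*gg (a*b+b*c+c*a) ≤ gg (a^2+2*b*c) + gg (b^2+2*c*a) + gg (c^2+2*a*b) := by
  rcases le_total a b with h1 | h1 <;> rcases le_total b c with h2 | h2 <;>
    rcases le_total a c with h3 | h3
  · have h := MRI_sorted c b a ha h1 h2; ring_nf at h ⊢; linarith
  · have h := MRI_sorted c b a ha h1 h2; ring_nf at h ⊢; linarith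
  · have h := MRI_sorted b c a ha h3 h2; ring_nf at h ⊢; linarith
  · have h := MRI_sorted b a c hc h3 h1; ring_nf at h ⊢; linarith
  · have h := MRI_sorted c a b hb h1 h3; ring_nf at h ⊢; linarith
  · have h := MRI_sorted a c b hb h2 h3; ring_nf at h ⊢; linarith
  · have h := MRI_sorted a b c hc h2 h1; ring_nf at h ⊢; linarith
  · have h := MRI_sorted a b c hc h2 h1; ring_nf at h ⊢; linarith

lemma JJ (a b c : ℝ) (ha : 0 ≤ a) (hb : 0 ≤ b) (hc : 0 ≤ c) (hs : a+b+c = 1) :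
    gg (a^2+b^2+c^2) + 2*gg (a*b+b*c+c*a) ≤ gg a + gg b + gg c := by
  have key : ∀ x y z : ℝ, 0 ≤ x → 0 ≤ y → 0 ≤ z →
      gg (a*x+b*y+c*z) ≤ a*gg x + b*gg y + c*gg z := by
    intro x y z hx hy hz
    have h := Real.convexOn_mul_log.map_sum_le (t := Finset.univ) (w := ![a,b,c])
      (p := ![x,y,z]) ?_ ?_ ?_
    · simpa [Fin.sum_univ_three, gg, smul_eq_mul] using h
    · intro i _; fin_cases i <;> simpa
    · simp [Fin.sum_univ_three, hs]
    · intro i _; fin_cases i <;> simpa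
  have h1 := key a b c ha hb hc
  have h2 := key b c a hb hc ha
  have h3 := key c a b hc ha hb
  have e1 : gg (a*a+b*b+c*c) = gg (a^2+b^2+c^2) := by ring_nf
  have e2 : gg (a*b+b*c+c*a) = gg (a*b+b*c+c*a) := rfl
  have e3 : gg (a*c+b*a+c*b) = gg (a*b+b*c+c*a) := by ring_nf
  have hsum : a*gg a + b*gg b + c*gg c + (a*gg b + b*gg c + c*gg a)
      + (a*gg c + b*gg a + c*gg b) = (a+b+c)*(gg a + gg b + gg c) := by ring
  rw [hs, one_mul] at hsum
  linarith

lemma zsum3 {M : Type*} [AddCommMonoid M] (f : ZMod 3 → M) :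
    ∑ s : ZMod 3, f s = f 0 + f 1 + f 2 := Fin.sum_univ_three f


end Aux

open Real in
/-- For i.i.d. random variables `U₁, U₂` with distribution `μ` on
`𝔽₃ = ℤ/3ℤ`, the coefficient `λ = 2` maximizes `H(U₁ + λ·U₂)` over `λ ∈ 𝔽₃`;
moreover if `μ(1) = μ(2)` then `H(U₁ + 2·U₂) = H(U₁ + U₂)`. -/
theorem two_maximizes_entropy_weighted_sum_zmod3
    {Ω : Type*} [MeasurableSpace Ω] (P : Measure Ω) [IsProbabilityMeasure P]
    (U₁ U₂ : Ω → ZMod 3) (hU₁ : Measurable U₁) (hU₂ : Measurable U₂)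
    (hindep : IndepFun U₁ U₂ P) (hid : IdentDistrib U₁ U₂ P P) :
    (∀ lam : ZMod 3,
      shEnt P (fun ω => U₁ ω + lam * U₂ ω) ≤ shEnt P (fun ω => U₁ ω + 2 * U₂ ω)) ∧
    (P (U₁ ⁻¹' {1}) = P (U₁ ⁻¹' {2}) →
      shEnt P (fun ω => U₁ ω + 2 * U₂ ω) = shEnt P (fun ω => U₁ ω + U₂ ω)) := by
  obtain ⟨p, hp⟩ : ∃ p : ZMod 3 → ℝ, ∀ i, p i = (P (U₁ ⁻¹' {i})).toReal :=
    ⟨fun i => (P (U₁ ⁻¹' {i})).toReal, fun i => rfl⟩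
  -- probability of weighted sums
  have hPre : ∀ lam s : ZMod 3, ((fun ω => U₁ ω + lam * U₂ ω) ⁻¹' {s})
      = ⋃ t : ZMod 3, (U₁ ⁻¹' {s - lam*t} ∩ U₂ ⁻¹' {t}) := by
    intro lam s
    ext ω
    simp only [Set.mem_preimage, Set.mem_singleton_iff, Set.mem_iUnion, Set.mem_inter_iff]
    constructor
    · intro h
      exact ⟨U₂ ω, by rw [← h]; ring, rfl⟩
    · rintro ⟨t, h1, h2⟩
      rw [h1, h2]; ring
  have hmeas : ∀ lam s : ZMod 3,
      P ((fun ω => U₁ ω + lam * U₂ ω) ⁻¹' {s})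
        = ∑ t : ZMod 3, P (U₁ ⁻¹' {s - lam*t}) * P (U₁ ⁻¹' {t}) := by
    intro lam s
    rw [hPre lam s, measure_iUnion, tsum_fintype]
    · refine Finset.sum_congr rfl fun t _ => ?_
      rw [hindep.measure_inter_preimage_eq_mul _ _ (measurableSet_singleton _)
        (measurableSet_singleton _),
        ← hid.measure_mem_eq (measurableSet_singleton t)]
    · intro t t' htt'
      simp only [Function.onFun]
      apply Set.disjoint_left.mpr
      rintro ω ⟨-, h2⟩ ⟨-, h2'⟩
      exact htt' (by simp only [Set.mem_preimage, Set.mem_singleton_iff] at h2 h2'; rw [← h2, ← h2'])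
    · exact fun t => (hU₁ (measurableSet_singleton _)).inter (hU₂ (measurableSet_singleton _))
  have hfin : ∀ s : Set Ω, P s ≠ ⊤ := fun s => measure_ne_top P s
  have hreal : ∀ lam s : ZMod 3,
      (P ((fun ω => U₁ ω + lam * U₂ ω) ⁻¹' {s})).toReal
        = ∑ t : ZMod 3, p (s - lam*t) * p t := by
    intro lam s
    rw [hmeas lam s, ENNReal.toReal_sum (fun t _ => ENNReal.mul_ne_top (hfin _) (hfin _))]
    exact Finset.sum_congr rfl fun t _ => by rw [ENNReal.toReal_mul, hp, hp]
  have hsh : ∀ lam : ZMod 3, shEnt P (fun ω => U₁ ω + lam * U₂ ω)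
      = ∑ s : ZMod 3, Real.negMulLog (∑ t : ZMod 3, p (s - lam*t) * p t) := by
    intro lam
    rw [shEnt, tsum_fintype]
    exact Finset.sum_congr rfl fun s _ => by rw [hreal lam s]
  -- basic facts about p
  have ha : 0 ≤ p 0 := by rw [hp]; exact ENNReal.toReal_nonneg
  have hb : 0 ≤ p 1 := by rw [hp]; exact ENNReal.toReal_nonneg
  have hc : 0 ≤ p 2 := by rw [hp]; exact ENNReal.toReal_nonneg
  have hsum : p 0 + p 1 + p 2 = 1 := by
    have huniv : (Set.univ : Set Ω) = ⋃ t : ZMod 3, U₁ ⁻¹' {t} := by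
      ext ω; simp
    have h1 : P (Set.univ) = ∑ t : ZMod 3, P (U₁ ⁻¹' {t}) := by
      rw [huniv, measure_iUnion, tsum_fintype]
      · intro t t' htt'
        simp only [Function.onFun]
        apply Set.disjoint_left.mpr
        rintro ω h2 h2'
        exact htt' (by simp only [Set.mem_preimage, Set.mem_singleton_iff] at h2 h2'; rw [← h2, ← h2'])
      · exact fun t => hU₁ (measurableSet_singleton _)
    have h2 : (P (Set.univ)).toReal = 1 := by simp
    rw [h1, ENNReal.toReal_sum (fun t _ => hfin _), zsum3] at h2
    rw [hp 0, hp 1, hp 2]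
    exact h2
  -- expand the three entropies
  have expand : ∀ lam : ZMod 3, ∀ s : ZMod 3,
      ∑ t : ZMod 3, p (s - lam*t) * p t
        = p s * p 0 + p (s-lam) * p 1 + p (s-2*lam) * p 2 := by
    intro lam s
    rw [zsum3]
    have e0 : s - lam*0 = s := by ring
    have e1 : s - lam*1 = s - lam := by ring
    have e2 : s - lam*2 = s - 2*lam := by ring
    rw [e0, e1, e2]
  have H2 : shEnt P (fun ω => U₁ ω + 2 * U₂ ω)
      = negMulLog (p 0 * p 0 + p 1 * p 1 + p 2 * p 2)
      + negMulLog (p 1 * p 0 + p 2 * p 1 + p 0 * p 2)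
      + negMulLog (p 2 * p 0 + p 0 * p 1 + p 1 * p 2) := by
    rw [hsh 2, zsum3, expand, expand, expand]
    simp only [show ((0:ZMod 3) - 2) = 1 from by decide, show ((0:ZMod 3) - 2*2) = 2 from by decide,
      show ((1:ZMod 3) - 2) = 2 from by decide, show ((1:ZMod 3) - 2*2) = 0 from by decide,
      show ((2:ZMod 3) - 2) = 0 from by decide, show ((2:ZMod 3) - 2*2) = 1 from by decide]
  have H1 : shEnt P (fun ω => U₁ ω + 1 * U₂ ω)
      = negMulLog (p 0 * p 0 + p 2 * p 1 + p 1 * p 2)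
      + negMulLog (p 1 * p 0 + p 0 * p 1 + p 2 * p 2)
      + negMulLog (p 2 * p 0 + p 1 * p 1 + p 0 * p 2) := by
    rw [hsh 1, zsum3, expand, expand, expand]
    simp only [show ((0:ZMod 3) - 1) = 2 from by decide, show ((0:ZMod 3) - 2*1) = 1 from by decide,
      show ((1:ZMod 3) - 1) = 0 from by decide, show ((1:ZMod 3) - 2*1) = 2 from by decide,
      show ((2:ZMod 3) - 1) = 1 from by decide, show ((2:ZMod 3) - 2*1) = 0 from by decide]
  have H0 : shEnt P (fun ω => U₁ ω + 0 * U₂ ω)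
      = negMulLog (p 0 * p 0 + p 0 * p 1 + p 0 * p 2)
      + negMulLog (p 1 * p 0 + p 1 * p 1 + p 1 * p 2)
      + negMulLog (p 2 * p 0 + p 2 * p 1 + p 2 * p 2) := by
    rw [hsh 0, zsum3, expand, expand, expand]
    simp only [show ((0:ZMod 3) - 0) = 0 from by decide, show ((0:ZMod 3) - 2*0) = 0 from by decide,
      show ((1:ZMod 3) - 0) = 1 from by decide, show ((1:ZMod 3) - 2*0) = 1 from by decide,
      show ((2:ZMod 3) - 0) = 2 from by decide, show ((2:ZMod 3) - 2*0) = 2 from by decide]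
  have hneg : ∀ x : ℝ, negMulLog x = -(gg x) := fun x => by
    rw [Real.negMulLog_eq_neg]; rfl
  obtain ⟨a, b, c, hA, hB, hC⟩ : ∃ a b c : ℝ, p 0 = a ∧ p 1 = b ∧ p 2 = c :=
    ⟨_, _, _, rfl, rfl, rfl⟩
  simp only [hA, hB, hC] at H0 H1 H2 ha hb hc hsum
  constructor
  · intro lam
    have hlam := (by decide : ∀ z : ZMod 3, z = 0 ∨ z = 1 ∨ z = 2) lam
    rcases hlam with h | h | h <;> subst h
    · -- lam = 0 : use JJ
      rw [H0, H2]
      have h := JJ a b c ha hb hc hsum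
      have e0 : a * a + a * b + a * c = a := by nlinarith [hsum]
      have e1 : b * a + b * b + b * c = b := by nlinarith [hsum]
      have e2 : c * a + c * b + c * c = c := by nlinarith [hsum]
      rw [e0, e1, e2]
      simp only [hneg]
      have f1 : gg (a * a + b * b + c * c) = gg (a^2 + b^2 + c^2) := by ring_nf
      have f2 : gg (b * a + c * b + a * c) = gg (a * b + b * c + c * a) := by ring_nf
      have f3 : gg (c * a + a * b + b * c) = gg (a * b + b * c + c * a) := by ring_nf
      linarith
    · -- lam = 1 : use MRI
      rw [H1, H2]
      have h := MRI a b c ha hb hc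
      simp only [hneg]
      have f1 : gg (a * a + b * b + c * c) = gg (a^2 + b^2 + c^2) := by ring_nf
      have f2 : gg (b * a + c * b + a * c) = gg (a * b + b * c + c * a) := by ring_nf
      have f3 : gg (c * a + a * b + b * c) = gg (a * b + b * c + c * a) := by ring_nf
      have g1 : gg (a * a + c * b + b * c) = gg (a^2 + 2*b*c) := by ring_nf
      have g2 : gg (b * a + a * b + c * c) = gg (c^2 + 2*a*b) := by ring_nf
      have g3 : gg (c * a + b * b + a * c) = gg (b^2 + 2*c*a) := by ring_nf
      linarith
    · -- lam = 2 : refl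
      exact le_refl _
  · intro h12
    have hbc : b = c := by rw [← hB, ← hC, hp, hp, h12]
    have hone : shEnt P (fun ω => U₁ ω + U₂ ω) = shEnt P (fun ω => U₁ ω + 1 * U₂ ω) := by
      congr 1; funext ω; rw [one_mul]
    rw [hone, H1, H2, hbc]
    congr 1
    · congr 2 <;> ring
    · congr 1; ring
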